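/- arXiv:2509.16147 — 3 statements merged into one kernel-verified Lean document; each statement's English description precedes it below -/
import Mathlib

section
/- Let G be a finite group satisfying the conjugacy-product property: for all x, y ∈ G with x^G ≠ (y⁻¹)^G, the setwise product x^G · y^G equals (xy)^G. Then G is either abelian or a Camina group. -/
open scoped Classical Pointwise

/-- The conjugacy class of `x` in `G`. -/
def conjClass {G : Type*} [Group G] (x : G) : Set G := {y | ∃ g : G, g * x * g⁻¹ = y}

/-- The adjacency matrix of a subset `C` of `G`. -/
noncomputable def adjMat (G : Type*) [Group G] (C : Set G) : Matrix G G ℂ :=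
  Matrix.of fun x y => if y * x⁻¹ ∈ C then (1 : ℂ) else 0

/-- The dual idempotent of a subset `C` of `G` (base point the identity). -/
noncomputable def dualIdem (G : Type*) [Group G] (C : Set G) : Matrix G G ℂ :=
  Matrix.of fun x y => if x = y ∧ y ∈ C then (1 : ℂ) else 0

/-- The Terwilliger algebra of the group association scheme of `G`, with base point `e`. -/
noncomputable def TerwAlg (G : Type*) [Group G] [Fintype G] [DecidableEq G] : Subalgebra ℂ (Matrix G G ℂ) :=
  Algebra.adjoin ℂ
    ((Set.range fun x : G => adjMat G (conjClass x)) ∪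
     (Set.range fun x : G => dualIdem G (conjClass x)))

/-- A Camina group: a nonabelian group in which every conjugacy class outside the
commutator subgroup is a coset of the commutator subgroup. -/
def IsCamina (G : Type*) [Group G] : Prop :=
  (¬ ∀ a b : G, a * b = b * a) ∧
  ∀ x : G, x ∉ commutator G → conjClass x = x • (commutator G : Set G)

/-- The action of the unit group of a field on (the multiplicative version of) its
additive group, by multiplication. -/
noncomputable def frobAct (F : Type*) [Field F] : Fˣ →* MulAut (Multiplicative F) where
  toFun u := AddEquiv.toMultiplicative (DistribMulAction.toAddAut Fˣ F u)
  map_one' := by ext x; simp [DistribMulAction.toAddAut]; rfl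
  map_mul' u v := by ext x; simp [DistribMulAction.toAddAut, mul_smul]; rfl


/-- The Frobenius group `F ⋊ Fˣ` for `F` the field with `p ^ r` elements. -/
abbrev FrobGrp (p r : ℕ) [Fact p.Prime] : Type :=
  Multiplicative (GaloisField p r) ⋊[frobAct (GaloisField p r)] (GaloisField p r)ˣ

open scoped commutatorElement

lemma mem_conjClass_self {G : Type*} [Group G] (x : G) : x ∈ conjClass x :=
  ⟨1, by simp⟩

lemma conjClass_symm {G : Type*} [Group G] {x y : G} (h : y ∈ conjClass x) :
    x ∈ conjClass y := by
  obtain ⟨g, rfl⟩ := h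
  exact ⟨g⁻¹, by group⟩

lemma conjClass_eq_of_mem {G : Type*} [Group G] {x y : G} (h : y ∈ conjClass x) :
    conjClass y = conjClass x := by
  obtain ⟨g, rfl⟩ := h
  ext z
  constructor
  · rintro ⟨k, rfl⟩; exact ⟨k * g, by group⟩
  · rintro ⟨k, rfl⟩; exact ⟨k * g⁻¹, by group⟩

lemma key_lemma {G : Type*} [Group G]
    (h : ∀ x y : G, conjClass x ≠ conjClass y⁻¹ →
      conjClass x * conjClass y = conjClass (x * y)) :
    ∀ c ∈ commutator G, ∀ y : G, y ∉ commutator G → y * c ∈ conjClass y := by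
  intro c hc
  rw [commutator_eq_closure] at hc
  induction hc using Subgroup.closure_induction with
  | mem c hcs =>
    obtain ⟨a, b, rfl⟩ := hcs
    intro y hy
    have hne : conjClass (y * a) ≠ conjClass (b * a⁻¹ * b⁻¹)⁻¹ := by
      intro heq
      have hmem : y * a ∈ conjClass (b * a⁻¹ * b⁻¹)⁻¹ := heq ▸ mem_conjClass_self _
      obtain ⟨g, hg⟩ := hmem
      have hy' : y = ⁅g * b, a⁆ := by
        have : g * (b * a⁻¹ * b⁻¹)⁻¹ * g⁻¹ = y * a := hg
        have h2 : y * a = ⁅g * b, a⁆ * a := by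
          rw [commutatorElement_def, ← this]; group
        exact mul_right_cancel h2
      exact hy (hy' ▸ Subgroup.commutator_mem_commutator (Subgroup.mem_top _)
        (Subgroup.mem_top _))
    have hprod := h (y * a) (b * a⁻¹ * b⁻¹) hne
    have hainv : a⁻¹ ∈ conjClass (b * a⁻¹ * b⁻¹) := ⟨b⁻¹, by group⟩
    have hymem : y ∈ conjClass (y * a) * conjClass (b * a⁻¹ * b⁻¹) := by
      have := Set.mul_mem_mul (mem_conjClass_self (y * a)) hainv
      simpa using this
    rw [hprod] at hymem
    have : y * a * (b * a⁻¹ * b⁻¹) = y * ⁅a, b⁆ := by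
      rw [commutatorElement_def]; group
    rw [this] at hymem
    exact conjClass_symm hymem
  | one =>
    intro y hy
    simpa using mem_conjClass_self y
  | mul a b ha hb iha ihb =>
    intro y hy
    have ha' : a ∈ commutator G := by rwa [commutator_eq_closure]
    have h1 : y * a ∈ conjClass y := iha y hy
    have hya : y * a ∉ commutator G := by
      intro hmem
      exact hy (by simpa using Subgroup.mul_mem _ hmem (Subgroup.inv_mem _ ha'))
    have h2 : y * a * b ∈ conjClass (y * a) := ihb (y * a) hya
    rw [conjClass_eq_of_mem h1] at h2
    simpa [mul_assoc] using h2
  | inv a ha iha =>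
    intro y hy
    have ha' : a ∈ commutator G := by rwa [commutator_eq_closure]
    have hya : y * a⁻¹ ∉ commutator G := by
      intro hmem
      exact hy (by simpa using Subgroup.mul_mem _ hmem ha')
    have := iha (y * a⁻¹) hya
    simp only [inv_mul_cancel_right] at this
    have h2 : y ∈ conjClass (y * a⁻¹) := by simpa using this
    exact conjClass_symm h2

/-- A finite group satisfying the conjugacy-product property is abelian or a Camina group. -/
theorem stmt3 {G : Type*} [Group G] [Finite G]
    (h : ∀ x y : G, conjClass x ≠ conjClass y⁻¹ →
      conjClass x * conjClass y = conjClass (x * y)) :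
    (∀ a b : G, a * b = b * a) ∨ IsCamina G := by
  by_cases hab : ∀ a b : G, a * b = b * a
  · exact Or.inl hab
  · right
    refine ⟨hab, fun x hx => ?_⟩
    ext z
    constructor
    · rintro ⟨g, rfl⟩
      rw [mem_leftCoset_iff]
      have : x⁻¹ * (g * x * g⁻¹) = ⁅x⁻¹, g⁆ := by
        rw [commutatorElement_def]; group
      rw [this]
      exact Subgroup.commutator_mem_commutator (Subgroup.mem_top _) (Subgroup.mem_top _)
    · intro hz
      rw [mem_leftCoset_iff] at hz
      have := key_lemma h (x⁻¹ * z) hz x hx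
      simpa using this
end

section
/- Let G be a finite abelian group. Then the dimension over ℂ of the Terwilliger algebra T(G) of the group association scheme of G equals |G|². -/
open scoped Classical Pointwise

lemma conjClass_comm {G : Type*} [CommGroup G] (x : G) : conjClass x = {x} := by
  ext y
  simp only [conjClass, Set.mem_setOf_eq, Set.mem_singleton_iff]
  constructor
  · rintro ⟨g, rfl⟩; rw [mul_comm g x, mul_assoc, mul_inv_cancel, mul_one]
  · rintro rfl; exact ⟨1, by group⟩

lemma key {G : Type*} [CommGroup G] [Fintype G] [DecidableEq G] (c d : G) :
    dualIdem G (conjClass c) * adjMat G (conjClass (d * c⁻¹)) * dualIdem G (conjClass d)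
      = Matrix.single c d 1 := by
  ext a b
  rw [conjClass_comm, conjClass_comm, conjClass_comm]
  simp only [Matrix.mul_apply, dualIdem, adjMat, Matrix.of_apply, Set.mem_singleton_iff,
    Matrix.single]
  rw [Finset.sum_eq_single b]
  · rw [Finset.sum_eq_single a]
    · by_cases h1 : a = c
      · subst h1
        by_cases h2 : b = d
        · subst h2; simp
        · simp [h2, Ne.symm h2, show ¬ b * a⁻¹ = d * a⁻¹ by simpa using h2]
      · simp [h1, Ne.symm h1]
    · intro x _ hx; simp [Ne.symm hx]
    · simp
  · intro x _ hx; simp [hx]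
  · simp


/-- Bannai–Munemasa: the Terwilliger algebra of a finite abelian group has dimension `|G|²`. -/
theorem stmt4 {G : Type*} [CommGroup G] [Fintype G] [DecidableEq G] :
    Module.finrank ℂ (TerwAlg G) = Fintype.card G ^ 2 := by
  have htop : TerwAlg G = ⊤ := by
    rw [eq_top_iff]
    intro M _
    have hstd : ∀ c d : G, Matrix.single c d (1:ℂ) ∈ TerwAlg G := by
      intro c d
      rw [← key c d]
      exact mul_mem (mul_mem
        (Algebra.subset_adjoin (Or.inr ⟨c, rfl⟩))
        (Algebra.subset_adjoin (Or.inl ⟨d * c⁻¹, rfl⟩)))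
        (Algebra.subset_adjoin (Or.inr ⟨d, rfl⟩))
    rw [Matrix.matrix_eq_sum_single M]
    exact sum_mem fun c _ => sum_mem fun d _ => by
      rw [show Matrix.single c d (M c d) = M c d • Matrix.single c d 1 by
        ext i j; simp [Matrix.single, Matrix.smul_apply]]
      exact Subalgebra.smul_mem _ (hstd c d) _
  rw [htop]
  have := Subalgebra.topEquiv (R := ℂ) (A := Matrix G G ℂ)
  rw [this.toLinearEquiv.finrank_eq, Module.finrank_matrix, Module.finrank_self, sq]
  ring
end

section
/- Let p be a prime and r ≥ 1 with q = p^r ≥ 3, and let G = F ⋊ Fˣ be the semidirect product of the additive group of F = GaloisField p r by its unit group Fˣ acting by multiplication. Then the Terwilliger algebra T(G) is isomorphic as a ℂ-algebra to the product (Matrix (Fin q) (Fin q) ℂ) × (Fin (q−1) → ℂ); that is, T(G) decomposes as the direct sum of a primary Wedderburn component of dimension q² and exactly q−1 one-dimensional Wedderburn components. -/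
open scoped Classical Pointwise

namespace Frob

variable {p r : ℕ} [Fact p.Prime]

local notation "F" => GaloisField p r

lemma frobAct_apply (u : Fˣ) (x : Multiplicative F) :
    (frobAct F u) x = Multiplicative.ofAdd ((u : F) * Multiplicative.toAdd x) := by
  simp [frobAct, DistribMulAction.toAddAut, Units.smul_def]; rfl

/-- index of the conjugacy class of `g` -/
noncomputable def cIdx (g : FrobGrp p r) : F :=
  if g.right = 1 then (if g = 1 then 0 else 1) else ((g.right : F))

lemma cIdx_one : cIdx (1 : FrobGrp p r) = 0 := by simp [cIdx]

lemma cIdx_eq_zero_iff (g : FrobGrp p r) : cIdx g = 0 ↔ g = 1 := by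
  unfold cIdx
  split_ifs with h1 h2
  · simp [h2]
  · simp [h2, (one_ne_zero : (1:F) ≠ 0)]
  · simpa [Units.ne_zero] using fun hg => h1 (by simp [hg])

lemma cIdx_eq_one_iff (g : FrobGrp p r) : cIdx g = 1 ↔ (g ≠ 1 ∧ g.right = 1) := by
  unfold cIdx
  split_ifs with h1 h2
  · simp [h2, h1, (zero_ne_one : (0:F) ≠ 1)]
  · simp [h2, h1]
  · constructor
    · intro h; exact absurd (Units.val_eq_one.mp h) h1
    · rintro ⟨-, h⟩; exact absurd h h1

lemma cIdx_eq_iff_right_eq {x : FrobGrp p r} (hx : x.right ≠ 1) (h : FrobGrp p r) :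
    cIdx h = cIdx x ↔ h.right = x.right := by
  have hxv : cIdx x = ((x.right : F)) := by unfold cIdx; rw [if_neg hx]
  rw [hxv]
  unfold cIdx
  split_ifs with h1 h2
  · rw [h1]; constructor
    · intro h0; exact absurd h0.symm (Units.ne_zero x.right)
    · intro h0; exact absurd h0.symm hx
  · rw [h1]; constructor
    · intro h0; exact absurd (Units.val_eq_one.mp h0.symm) hx
    · intro h0; exact absurd h0.symm hx
  · exact ⟨fun h0 => Units.ext h0, fun h0 => congrArg _ h0⟩

lemma conj_right (k g : FrobGrp p r) : (k * g * k⁻¹).right = g.right := by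
  simp [mul_comm]

lemma cIdx_conj (k g : FrobGrp p r) : cIdx (k * g * k⁻¹) = cIdx g := by
  by_cases hg : g.right = 1
  · unfold cIdx
    have hiff : k * g * k⁻¹ = 1 ↔ g = 1 := by
      constructor
      · intro h
        have h2 := congrArg (fun z => k⁻¹ * z * k) h
        simpa [mul_assoc] using h2
      · rintro rfl; simp
    rw [conj_right, if_pos hg, if_pos hg]
    simp [hiff]
  · unfold cIdx
    rw [conj_right, if_neg hg, if_neg hg]

lemma mem_conjClass_iff (g h : FrobGrp p r) : h ∈ conjClass g ↔ cIdx h = cIdx g := by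
  constructor
  · rintro ⟨k, rfl⟩; exact cIdx_conj k g
  · intro hidx
    by_cases hg0 : cIdx g = 0
    · have hg1 : g = 1 := (cIdx_eq_zero_iff g).mp hg0
      have hh1 : h = 1 := (cIdx_eq_zero_iff h).mp (hidx.trans hg0)
      exact ⟨1, by simp [hg1, hh1]⟩
    by_cases hg1 : cIdx g = 1
    · obtain ⟨hgne, hgr⟩ := (cIdx_eq_one_iff g).mp hg1
      obtain ⟨hhne, hhr⟩ := (cIdx_eq_one_iff h).mp (hidx.trans hg1)
      set a := Multiplicative.toAdd g.left with ha
      set b := Multiplicative.toAdd h.left with hb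
      have hga : a ≠ 0 := by
        intro h0
        apply hgne
        refine SemidirectProduct.ext ?_ hgr
        rw [← ofAdd_toAdd g.left, ← ha, h0]; rfl
      have hhb : b ≠ 0 := by
        intro h0
        apply hhne
        refine SemidirectProduct.ext ?_ hhr
        rw [← ofAdd_toAdd h.left, ← hb, h0]; rfl
      refine ⟨⟨1, Units.mk0 (b * a⁻¹) (by simp [hga, hhb])⟩, ?_⟩
      refine SemidirectProduct.ext ?_ ?_
      · simp only [SemidirectProduct.mul_left, SemidirectProduct.mul_right,
          SemidirectProduct.inv_left, SemidirectProduct.inv_right, frobAct_apply, one_mul,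
          map_one, toAdd_ofAdd, inv_one, toAdd_one, mul_zero, ofAdd_zero, mul_one]
        rw [← ofAdd_toAdd g.left, ← ha]
        simp only [toAdd_ofAdd, ← ofAdd_add, Units.val_mk0, toAdd_inv, toAdd_one, neg_zero,
          mul_zero, add_zero]
        rw [show b * a⁻¹ * a = b from by field_simp]
        exact ofAdd_toAdd h.left
      · simp [hgr, hhr]
        done
    · have hgr : g.right ≠ 1 := by
        intro h0
        unfold cIdx at hg0 hg1
        rw [if_pos h0] at hg0 hg1
        by_cases hh : g = 1
        · rw [if_pos hh] at hg0; exact hg0 rfl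
        · rw [if_neg hh] at hg1; exact hg1 rfl
      have hhr : h.right = g.right := (cIdx_eq_iff_right_eq hgr h).mp hidx
      set a := Multiplicative.toAdd g.left with ha
      set b := Multiplicative.toAdd h.left with hb
      have hu1 : (g.right : F) ≠ 1 := fun h0 => hgr (Units.val_eq_one.mp h0)
      have hu : (1 : F) - (g.right : F) ≠ 0 := sub_ne_zero.mpr (Ne.symm hu1)
      refine ⟨⟨Multiplicative.ofAdd ((b - a) * ((1 : F) - (g.right : F))⁻¹), 1⟩, ?_⟩
      refine SemidirectProduct.ext ?_ ?_
      · set c := (b - a) * ((1 : F) - (g.right : F))⁻¹ with hc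
        simp only [SemidirectProduct.mul_left, SemidirectProduct.mul_right,
          SemidirectProduct.inv_left, SemidirectProduct.inv_right, frobAct_apply,
          map_one, toAdd_ofAdd, inv_one, toAdd_one, one_mul, mul_one, Units.val_one,
          toAdd_inv, toAdd_mul]
        rw [← ofAdd_toAdd g.left, ← ha]
        simp only [map_one, MulAut.one_apply, toAdd_inv, toAdd_ofAdd, ← ofAdd_neg,
          ← ofAdd_add]
        rw [show c + a + (g.right : F) * -c = b from by rw [hc]; field_simp; ring]
        exact ofAdd_toAdd h.left
      · simp only [SemidirectProduct.mul_right, SemidirectProduct.inv_right]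
        rw [hhr]
        group

/-- canonical representative of the class with index `t` -/
noncomputable def κ (t : F) : FrobGrp p r :=
  if h : t = 0 then 1
  else if t = 1 then ⟨Multiplicative.ofAdd 1, 1⟩
  else ⟨1, Units.mk0 t h⟩

lemma cIdx_κ (t : F) : cIdx (κ (p := p) (r := r) t) = t := by
  unfold κ
  split_ifs with h0 h1
  · rw [cIdx_one, h0]
  · rw [h1]
    rw [cIdx_eq_one_iff]
    constructor
    · intro hc
      have := congrArg (fun z => Multiplicative.toAdd (SemidirectProduct.left z)) hc
      simp only [toAdd_ofAdd, SemidirectProduct.one_left, toAdd_one] at this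
      exact one_ne_zero this
    · rfl
  · unfold cIdx
    have : (⟨1, Units.mk0 t h0⟩ : FrobGrp p r).right = Units.mk0 t h0 := rfl
    rw [this, if_neg (by simpa [Units.ext_iff] using h1)]
    rfl

/-- index of the class attached to the scalar component `u` -/
noncomputable def idx (u : (GaloisField p r)ˣ) : F := if u = 1 then 1 else (u : F)

lemma idx_ne_zero (u : (GaloisField p r)ˣ) : idx u ≠ 0 := by
  unfold idx; split_ifs with h
  · exact one_ne_zero
  · exact Units.ne_zero u

lemma idx_injective : Function.Injective (idx (p := p) (r := r)) := by
  intro u v h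
  unfold idx at h
  split_ifs at h with h1 h2 h2
  · rw [h1, h2]
  · exact absurd (Units.val_eq_one.mp h.symm) h2
  · exact absurd (Units.val_eq_one.mp h) h1
  · exact Units.ext h

lemma right_of_cIdx_idx {g : FrobGrp p r} {u : (GaloisField p r)ˣ}
    (h : cIdx g = idx u) : g.right = u := by
  unfold idx at h
  split_ifs at h with h1
  · rw [h1]; exact ((cIdx_eq_one_iff g).mp h).2
  · unfold cIdx at h
    split_ifs at h with h2 h3
    · exact absurd h.symm (Units.ne_zero u)
    · exact absurd (Units.val_eq_one.mp h.symm) h1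
    · exact Units.ext h

lemma cIdx_eq_idx_right {g : FrobGrp p r} (hg : cIdx g ≠ 0) : cIdx g = idx g.right := by
  have hg1 : g ≠ 1 := fun h => hg ((cIdx_eq_zero_iff g).mpr h)
  unfold cIdx idx
  by_cases h1 : g.right = 1
  · rw [if_pos h1, if_pos h1, if_neg hg1]
  · rw [if_neg h1, if_neg h1]

/-- first base point in class `u` -/
noncomputable def pt1 (u : (GaloisField p r)ˣ) : FrobGrp p r :=
  if u = 1 then ⟨Multiplicative.ofAdd 1, 1⟩ else ⟨1, u⟩

/-- second base point in class `u`; `c2` is a fixed element of `F` other than `0` and `1`. -/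
noncomputable def pt2 (c2 : F) (u : (GaloisField p r)ˣ) : FrobGrp p r :=
  if u = 1 then ⟨Multiplicative.ofAdd c2, 1⟩ else ⟨Multiplicative.ofAdd 1, u⟩

lemma cIdx_pt1 (u : (GaloisField p r)ˣ) : cIdx (pt1 u) = idx u := by
  unfold pt1 idx
  split_ifs with h
  · rw [cIdx_eq_one_iff]
    refine ⟨?_, rfl⟩
    intro hc
    have := congrArg (fun z => Multiplicative.toAdd (SemidirectProduct.left z)) hc
    simpa using this
  · unfold cIdx
    have h2 : (⟨1, u⟩ : FrobGrp p r).right = u := rfl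
    rw [h2, if_neg h]

lemma cIdx_pt2 {c2 : F} (hc0 : c2 ≠ 0) (u : (GaloisField p r)ˣ) :
    cIdx (pt2 c2 u) = idx u := by
  unfold pt2 idx
  split_ifs with h
  · rw [cIdx_eq_one_iff]
    refine ⟨?_, rfl⟩
    intro hc
    have := congrArg (fun z => Multiplicative.toAdd (SemidirectProduct.left z)) hc
    simp only [toAdd_ofAdd, SemidirectProduct.one_left, toAdd_one] at this
    exact hc0 this
  · unfold cIdx
    have h2 : (⟨Multiplicative.ofAdd 1, u⟩ : FrobGrp p r).right = u := rfl
    rw [h2, if_neg h]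

lemma pt1_ne_pt2 {c2 : F} (hc1 : c2 ≠ 1) (u : (GaloisField p r)ˣ) : pt1 u ≠ pt2 c2 u := by
  unfold pt1 pt2
  split_ifs with h
  · intro hc
    have := congrArg (fun z => Multiplicative.toAdd (SemidirectProduct.left z)) hc
    simp only [toAdd_ofAdd] at this
    exact hc1 this.symm
  · intro hc
    have := congrArg (fun z => Multiplicative.toAdd (SemidirectProduct.left z)) hc
    simpa using this

section WithFintype

variable [Fintype (FrobGrp p r)] [DecidableEq (FrobGrp p r)]

noncomputable instance instFintypeGF : Fintype (GaloisField p r) := Fintype.ofFinite _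
noncomputable instance instFintypeGFUnits : Fintype (GaloisField p r)ˣ := Fintype.ofFinite _

lemma dualIdem_mulVec (C : Set (FrobGrp p r)) (v : FrobGrp p r → ℂ) (x : FrobGrp p r) :
    (dualIdem _ C).mulVec v x = if x ∈ C then v x else 0 := by
  unfold Matrix.mulVec dualIdem dotProduct
  simp only [Matrix.of_apply]
  rw [Finset.sum_eq_single x]
  · by_cases h : x ∈ C <;> simp [h]
  · intro y _ hy
    rw [if_neg (fun hc => hy hc.1.symm), zero_mul]
  · intro h; exact absurd (Finset.mem_univ x) h

lemma adjMat_mulVec (C : Set (FrobGrp p r)) (v : FrobGrp p r → ℂ) (x : FrobGrp p r) :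
    (adjMat _ C).mulVec v x = ∑ y, if y * x⁻¹ ∈ C then v y else 0 := by
  unfold Matrix.mulVec adjMat dotProduct
  simp only [Matrix.of_apply]
  exact Finset.sum_congr rfl fun y _ => by by_cases h : y * x⁻¹ ∈ C <;> simp [h]

/-- indicator of the class with index `j` -/
noncomputable def ind (j : F) : FrobGrp p r → ℂ := fun g => if cIdx g = j then 1 else 0

/-- the "primary component" map -/
noncomputable def Phi1 (t : Matrix (FrobGrp p r) (FrobGrp p r) ℂ) : Matrix F F ℂ :=
  Matrix.of fun i j => t.mulVec (ind j) (κ i)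

lemma Phi1_apply (t : Matrix (FrobGrp p r) (FrobGrp p r) ℂ) (i j : F) :
    Phi1 t i j = t.mulVec (ind j) (κ i) := rfl

/-- a function which is constant on conjugacy classes equals a combination of indicators -/
lemma decomp_classfun {v : FrobGrp p r → ℂ}
    (hv : ∀ x y, cIdx x = cIdx y → v x = v y) :
    v = ∑ i : F, v (κ i) • ind i := by
  funext x
  rw [Finset.sum_apply]
  have h1 : ∀ i : F, (v (κ i) • ind i) x = if cIdx x = i then v (κ i) else 0 := by
    intro i
    simp only [Pi.smul_apply, ind, smul_eq_mul]
    by_cases h : cIdx x = i <;> simp [h]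
  rw [Finset.sum_congr rfl fun i _ => h1 i, Finset.sum_eq_single (cIdx x)]
  · rw [if_pos rfl]; exact hv _ _ (cIdx_κ (cIdx x)).symm
  · intro i _ hi; exact if_neg (fun hc => hi hc.symm)
  · intro h; exact absurd (Finset.mem_univ _) h

/-- Key invariance: elements of the Terwilliger algebra map class indicators to
class functions. -/
lemma classfun_invariant {t : Matrix (FrobGrp p r) (FrobGrp p r) ℂ}
    (ht : t ∈ TerwAlg (FrobGrp p r)) :
    ∀ (j : F) (x y : FrobGrp p r), cIdx x = cIdx y →
      t.mulVec (ind j) x = t.mulVec (ind j) y := by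
  have ht' : t ∈ Algebra.adjoin ℂ
      ((Set.range fun x : FrobGrp p r => adjMat _ (conjClass x)) ∪
       (Set.range fun x : FrobGrp p r => dualIdem _ (conjClass x))) := ht
  clear ht
  induction ht' using Algebra.adjoin_induction with
  | mem s hs =>
    rcases hs with ⟨g, rfl⟩ | ⟨g, rfl⟩
    · -- adjacency matrix
      intro j x y hxy
      obtain ⟨k, hk⟩ : y ∈ conjClass x := (mem_conjClass_iff x y).mpr hxy.symm
      rw [adjMat_mulVec, adjMat_mulVec]
      refine Fintype.sum_bijective (fun z => k * z * k⁻¹) (MulAut.conj k).bijective _ _ ?_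
      intro z
      have h1 : (k * z * k⁻¹) * y⁻¹ = k * (z * x⁻¹) * k⁻¹ := by rw [← hk]; group
      have h2 : ((k * z * k⁻¹) * y⁻¹ ∈ conjClass g) = ((z * x⁻¹) ∈ conjClass g) := by
        rw [h1]
        simp only [mem_conjClass_iff, cIdx_conj]
      have h3 : ind j (k * z * k⁻¹) = ind j z := by
        unfold ind; rw [cIdx_conj]
      rw [h2, h3]
    · -- dual idempotent
      intro j x y hxy
      have hmx : (x ∈ conjClass g) = (cIdx x = cIdx g) := propext (mem_conjClass_iff g x)
      have hmy : (y ∈ conjClass g) = (cIdx y = cIdx g) := propext (mem_conjClass_iff g y)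
      rw [dualIdem_mulVec, dualIdem_mulVec, hmx, hmy, hxy]
      unfold ind
      rw [hxy]
  | algebraMap c =>
    intro j x y hxy
    rw [Algebra.algebraMap_eq_smul_one, Matrix.smul_mulVec, Matrix.one_mulVec]
    simp only [Pi.smul_apply, ind, hxy]
  | add s t hs ht ihs iht =>
    intro j x y hxy
    rw [Matrix.add_mulVec]
    simp only [Pi.add_apply, ihs j x y hxy, iht j x y hxy]
  | mul s t hs ht ihs iht =>
    intro j x y hxy
    rw [← Matrix.mulVec_mulVec, decomp_classfun (iht j)]
    have hsum : ∀ z, s.mulVec (∑ i : F, t.mulVec (ind j) (κ i) • ind i) z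
        = ∑ i : F, t.mulVec (ind j) (κ i) • s.mulVec (ind i) z := by
      intro z
      rw [← Matrix.mulVecLin_apply, map_sum]
      simp only [map_smul, Finset.sum_apply, Pi.smul_apply, Matrix.mulVecLin_apply]
    rw [hsum, hsum]
    exact Finset.sum_congr rfl fun i _ => by rw [ihs i x y hxy]

lemma mulVec_ind_eq {t : Matrix (FrobGrp p r) (FrobGrp p r) ℂ}
    (ht : t ∈ TerwAlg (FrobGrp p r)) (j : F) (x : FrobGrp p r) :
    t.mulVec (ind j) x = Phi1 t (cIdx x) j := by
  rw [Phi1_apply]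
  exact classfun_invariant ht j x (κ (cIdx x)) (cIdx_κ (cIdx x)).symm

lemma mulVec_ind_decomp {t : Matrix (FrobGrp p r) (FrobGrp p r) ℂ}
    (ht : t ∈ TerwAlg (FrobGrp p r)) (j : F) :
    t.mulVec (ind j) = ∑ i : F, Phi1 t i j • ind i := by
  rw [decomp_classfun (classfun_invariant ht j)]
  rfl

lemma Phi1_mul {s t : Matrix (FrobGrp p r) (FrobGrp p r) ℂ}
    (hs : s ∈ TerwAlg (FrobGrp p r)) (ht : t ∈ TerwAlg (FrobGrp p r)) :
    Phi1 (s * t) = Phi1 s * Phi1 t := by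
  ext i j
  rw [Phi1_apply, ← Matrix.mulVec_mulVec, mulVec_ind_decomp ht j, Matrix.mul_apply]
  rw [← Matrix.mulVecLin_apply, map_sum]
  simp only [map_smul, Finset.sum_apply, Pi.smul_apply, Matrix.mulVecLin_apply, smul_eq_mul]
  exact Finset.sum_congr rfl fun k _ => mul_comm _ _

lemma Phi1_one : Phi1 (1 : Matrix (FrobGrp p r) (FrobGrp p r) ℂ) = 1 := by
  ext i j
  rw [Phi1_apply, Matrix.one_mulVec]
  unfold ind
  rw [cIdx_κ, Matrix.one_apply]

lemma Phi1_add (s t : Matrix (FrobGrp p r) (FrobGrp p r) ℂ) :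
    Phi1 (s + t) = Phi1 s + Phi1 t := by
  ext i j
  simp only [Phi1_apply, Matrix.add_mulVec, Pi.add_apply, Matrix.add_apply]

lemma Phi1_smul (c : ℂ) (t : Matrix (FrobGrp p r) (FrobGrp p r) ℂ) :
    Phi1 (c • t) = c • Phi1 t := by
  ext i j
  simp only [Phi1_apply, Matrix.smul_mulVec, Pi.smul_apply, Matrix.smul_apply]

/-- membership in the `u`-th family of one-dimensional modules -/
def IsW (u : (GaloisField p r)ˣ) (w : FrobGrp p r → ℂ) : Prop :=
  (∀ g, cIdx g ≠ idx u → w g = 0) ∧ ∑ g, w g = 0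

lemma IsW.cIdx_eq {u : (GaloisField p r)ˣ} {w : FrobGrp p r → ℂ} (hw : IsW u w)
    {g : FrobGrp p r} (hg : w g ≠ 0) : cIdx g = idx u :=
  by_contra fun h => hg (hw.1 g h)

lemma IsW.right_eq {u : (GaloisField p r)ˣ} {w : FrobGrp p r → ℂ} (hw : IsW u w)
    {g : FrobGrp p r} (hg : w g ≠ 0) : g.right = u :=
  right_of_cIdx_idx (hw.cIdx_eq hg)

lemma sum_right {u : (GaloisField p r)ˣ} {w : FrobGrp p r → ℂ} (hw : IsW u w)
    (v : (GaloisField p r)ˣ) :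
    ∑ g : FrobGrp p r, (if g.right = v then w g else 0) = 0 := by
  by_cases hv : v = u
  · subst hv
    have heq : ∑ g : FrobGrp p r, (if g.right = v then w g else 0) = ∑ g : FrobGrp p r, w g := by
      refine Finset.sum_congr rfl fun g _ => ?_
      by_cases hg : w g = 0
      · by_cases h : g.right = v <;> simp [h, hg]
      · rw [if_pos (hw.right_eq hg)]
    rw [heq, hw.2]
  · refine Finset.sum_eq_zero fun g _ => ?_
    by_cases hg : w g = 0
    · by_cases h : g.right = v <;> simp [h, hg]
    · rw [if_neg (fun h => hv ((h.symm.trans (hw.right_eq hg))))]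

lemma scal_invariant {t : Matrix (FrobGrp p r) (FrobGrp p r) ℂ}
    (ht : t ∈ TerwAlg (FrobGrp p r)) (u : (GaloisField p r)ˣ) :
    ∃ c : ℂ, ∀ w, IsW u w → t.mulVec w = c • w := by
  have ht' : t ∈ Algebra.adjoin ℂ
      ((Set.range fun x : FrobGrp p r => adjMat _ (conjClass x)) ∪
       (Set.range fun x : FrobGrp p r => dualIdem _ (conjClass x))) := ht
  clear ht
  induction ht' using Algebra.adjoin_induction with
  | mem s hs =>
    rcases hs with ⟨g, rfl⟩ | ⟨g, rfl⟩
    · -- adjacency matrix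
      by_cases h0 : cIdx g = 0
      · refine ⟨1, fun w hw => ?_⟩
        funext x
        rw [adjMat_mulVec]
        have key : ∀ y : FrobGrp p r, (if y * x⁻¹ ∈ conjClass g then w y else 0)
            = (if y = x then w y else 0) := by
          intro y
          have hiff : (y * x⁻¹ ∈ conjClass g) ↔ (y = x) := by
            rw [mem_conjClass_iff, h0]
            rw [cIdx_eq_zero_iff, mul_inv_eq_one]
          exact if_congr hiff rfl rfl
        rw [Finset.sum_congr rfl fun y _ => key y, Finset.sum_eq_single x
          (fun y _ hy => if_neg hy) (fun h => absurd (Finset.mem_univ _) h), if_pos rfl]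
        simp
      by_cases h1 : cIdx g = 1
      · refine ⟨-1, fun w hw => ?_⟩
        funext x
        rw [adjMat_mulVec]
        have key : ∀ y : FrobGrp p r, (if y * x⁻¹ ∈ conjClass g then w y else 0)
            = (if y.right = x.right then w y else 0) - (if y = x then w y else 0) := by
          intro y
          have hne_iff : y * x⁻¹ = 1 ↔ y = x := mul_inv_eq_one
          have hr_iff : (y * x⁻¹).right = 1 ↔ y.right = x.right := by
            rw [SemidirectProduct.mul_right, SemidirectProduct.inv_right, mul_inv_eq_one]
          have hmem : (y * x⁻¹ ∈ conjClass g) ↔ (y ≠ x ∧ y.right = x.right) := by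
            rw [mem_conjClass_iff, h1, cIdx_eq_one_iff]
            exact and_congr (not_congr hne_iff) hr_iff
          rw [if_congr hmem rfl rfl]
          by_cases hyx : y = x
          · subst hyx; simp
          · simp only [hyx, if_neg hyx, sub_zero]
            by_cases hr : y.right = x.right <;> simp [hr, hyx]
        rw [Finset.sum_congr rfl fun y _ => key y, Finset.sum_sub_distrib,
          sum_right hw x.right, Finset.sum_eq_single x
          (fun y _ hy => if_neg hy) (fun h => absurd (Finset.mem_univ _) h), if_pos rfl]
        simp
      · refine ⟨0, fun w hw => ?_⟩
        funext x
        rw [adjMat_mulVec]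
        have hgr : g.right ≠ 1 := by
          intro hr
          unfold cIdx at h0 h1
          rw [if_pos hr] at h0 h1
          by_cases hg : g = 1
          · rw [if_pos hg] at h0; exact h0 rfl
          · rw [if_neg hg] at h1; exact h1 rfl
        have key : ∀ y : FrobGrp p r, (if y * x⁻¹ ∈ conjClass g then w y else 0)
            = (if y.right = g.right * x.right then w y else 0) := by
          intro y
          have hiff : (y * x⁻¹ ∈ conjClass g) ↔ (y.right = g.right * x.right) := by
            rw [mem_conjClass_iff, cIdx_eq_iff_right_eq hgr, SemidirectProduct.mul_right,
              SemidirectProduct.inv_right, mul_inv_eq_iff_eq_mul]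
          exact if_congr hiff rfl rfl
        rw [Finset.sum_congr rfl fun y _ => key y, sum_right hw _]
        simp
    · -- dual idempotent
      refine ⟨if cIdx g = idx u then 1 else 0, fun w hw => ?_⟩
      funext x
      rw [dualIdem_mulVec]
      have hmem : (x ∈ conjClass g) ↔ (cIdx x = cIdx g) := mem_conjClass_iff g x
      rw [if_congr hmem rfl rfl]
      by_cases hx : w x = 0
      · by_cases h : cIdx x = cIdx g <;> simp [h, hx]
      · have hxu : cIdx x = idx u := hw.cIdx_eq hx
        rw [hxu]
        by_cases h : cIdx g = idx u
        · rw [h, if_pos rfl, if_pos rfl]; simp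
        · rw [if_neg (fun hc => h hc.symm), if_neg h]; simp
  | algebraMap c =>
    refine ⟨c, fun w hw => ?_⟩
    rw [Algebra.algebraMap_eq_smul_one, Matrix.smul_mulVec, Matrix.one_mulVec]
  | add s t hs ht ihs iht =>
    obtain ⟨cs, hcs⟩ := ihs
    obtain ⟨ct, hct⟩ := iht
    refine ⟨cs + ct, fun w hw => ?_⟩
    rw [Matrix.add_mulVec, hcs w hw, hct w hw, add_smul]
  | mul s t hs ht ihs iht =>
    obtain ⟨cs, hcs⟩ := ihs
    obtain ⟨ct, hct⟩ := iht
    refine ⟨cs * ct, fun w hw => ?_⟩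
    rw [← Matrix.mulVec_mulVec, hct w hw, Matrix.mulVec_smul, hcs w hw, smul_smul,
      mul_comm]

/-- the distinguished element of the `u`-th family -/
noncomputable def wv (c2 : F) (u : (GaloisField p r)ˣ) : FrobGrp p r → ℂ :=
  fun g => (if g = pt1 u then 1 else 0) - (if g = pt2 c2 u then 1 else 0)

lemma IsW_wv {c2 : F} (hc0 : c2 ≠ 0) (hc1 : c2 ≠ 1) (u : (GaloisField p r)ˣ) :
    IsW u (wv c2 u) := by
  constructor
  · intro g hg
    unfold wv
    rw [if_neg (fun h : g = pt1 u => hg (by rw [h, cIdx_pt1 u])),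
      if_neg (fun h : g = pt2 c2 u => hg (by rw [h, cIdx_pt2 hc0 u])), sub_zero]
  · unfold wv
    rw [Finset.sum_sub_distrib]
    rw [Finset.sum_eq_single (pt1 u) (fun y _ hy => if_neg hy)
      (fun h => absurd (Finset.mem_univ _) h), if_pos rfl]
    rw [Finset.sum_eq_single (pt2 c2 u) (fun y _ hy => if_neg hy)
      (fun h => absurd (Finset.mem_univ _) h), if_pos rfl, sub_self]

lemma wv_pt1 {c2 : F} (hc1 : c2 ≠ 1) (u : (GaloisField p r)ˣ) : wv c2 u (pt1 u) = 1 := by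
  unfold wv
  rw [if_pos rfl, if_neg (pt1_ne_pt2 hc1 u), sub_zero]

/-- the "scalar components" map -/
noncomputable def Phi2 (c2 : F) (t : Matrix (FrobGrp p r) (FrobGrp p r) ℂ) :
    (GaloisField p r)ˣ → ℂ := fun u => t.mulVec (wv c2 u) (pt1 u)

lemma mulVec_eq_Phi2_smul {c2 : F} (hc0 : c2 ≠ 0) (hc1 : c2 ≠ 1)
    {t : Matrix (FrobGrp p r) (FrobGrp p r) ℂ} (ht : t ∈ TerwAlg (FrobGrp p r))
    (u : (GaloisField p r)ˣ) {w : FrobGrp p r → ℂ} (hw : IsW u w) :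
    t.mulVec w = Phi2 c2 t u • w := by
  obtain ⟨c, hc⟩ := scal_invariant ht u
  have h1 := hc _ (IsW_wv hc0 hc1 u)
  have h2 : Phi2 c2 t u = c := by
    unfold Phi2
    rw [h1]
    simp [wv_pt1 hc1 u]
  rw [h2]
  exact hc w hw

lemma Phi2_mul {c2 : F} (hc0 : c2 ≠ 0) (hc1 : c2 ≠ 1)
    {s t : Matrix (FrobGrp p r) (FrobGrp p r) ℂ}
    (hs : s ∈ TerwAlg (FrobGrp p r)) (ht : t ∈ TerwAlg (FrobGrp p r)) :
    Phi2 c2 (s * t) = Phi2 c2 s * Phi2 c2 t := by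
  funext u
  show (s * t).mulVec (wv c2 u) (pt1 u) = _
  rw [← Matrix.mulVec_mulVec, mulVec_eq_Phi2_smul hc0 hc1 ht u (IsW_wv hc0 hc1 u),
    Matrix.mulVec_smul]
  simp only [Pi.smul_apply, smul_eq_mul, Pi.mul_apply]
  rw [mul_comm]
  rfl

lemma Phi2_one {c2 : F} (hc1 : c2 ≠ 1) : Phi2 c2 (1 : Matrix (FrobGrp p r) (FrobGrp p r) ℂ) = 1 := by
  funext u
  show (1 : Matrix (FrobGrp p r) (FrobGrp p r) ℂ).mulVec (wv c2 u) (pt1 u) = 1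
  rw [Matrix.one_mulVec, wv_pt1 hc1 u]

lemma Phi2_add (c2 : F) (s t : Matrix (FrobGrp p r) (FrobGrp p r) ℂ) :
    Phi2 c2 (s + t) = Phi2 c2 s + Phi2 c2 t := by
  funext u
  show (s + t).mulVec _ _ = _
  rw [Matrix.add_mulVec]
  rfl

lemma Phi2_smul (c2 : F) (c : ℂ) (t : Matrix (FrobGrp p r) (FrobGrp p r) ℂ) :
    Phi2 c2 (c • t) = c • Phi2 c2 t := by
  funext u
  show (c • t).mulVec _ _ = _
  rw [Matrix.smul_mulVec]
  rfl

lemma mulVec_delta (t : Matrix (FrobGrp p r) (FrobGrp p r) ℂ) (g x : FrobGrp p r) :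
    t.mulVec (fun y => if y = g then (1:ℂ) else 0) x = t x g := by
  unfold Matrix.mulVec dotProduct
  change (∑ y : FrobGrp p r, t x y * (if y = g then (1:ℂ) else 0)) = t x g
  rw [Finset.sum_eq_single g]
  · rw [if_pos rfl, mul_one]
  · intro y _ hy; rw [if_neg hy, mul_zero]
  · intro h; exact absurd (Finset.mem_univ _) h

/-- injectivity of the pair `(Phi1, Phi2)` on the Terwilliger algebra -/
lemma eq_zero_of_Phi_eq_zero {c2 : F} (hc0 : c2 ≠ 0) (hc1 : c2 ≠ 1)
    {t : Matrix (FrobGrp p r) (FrobGrp p r) ℂ} (ht : t ∈ TerwAlg (FrobGrp p r))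
    (h1 : Phi1 t = 0) (h2 : Phi2 c2 t = 0) : t = 0 := by
  ext x g
  rw [Matrix.zero_apply, ← mulVec_delta t g x]
  by_cases hg0 : cIdx g = 0
  · have hg1 : g = 1 := (cIdx_eq_zero_iff g).mp hg0
    have hδ : (fun y => if y = g then (1:ℂ) else 0) = ind 0 := by
      funext y
      exact if_congr (by rw [hg1, ← cIdx_eq_zero_iff y]) rfl rfl
    rw [hδ, mulVec_ind_eq ht 0 x, h1, Matrix.zero_apply]
  · set u := g.right with hu
    have hidx : cIdx g = idx u := cIdx_eq_idx_right hg0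
    set m : ℂ := ∑ y : FrobGrp p r, ind (idx u) y with hm
    have hmnat : m = ((Finset.univ.filter (fun y : FrobGrp p r => cIdx y = idx u)).card : ℂ) := by
      rw [hm]; unfold ind; rw [Finset.sum_boole]
    have hmne : m ≠ 0 := by
      rw [hmnat]
      rw [Nat.cast_ne_zero]
      exact Finset.card_ne_zero_of_mem (Finset.mem_filter.mpr ⟨Finset.mem_univ g, hidx ▸ rfl⟩)
    set w : FrobGrp p r → ℂ := fun y => (if y = g then (1:ℂ) else 0) - m⁻¹ * ind (idx u) y
      with hw
    have hWw : IsW u w := by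
      constructor
      · intro y hy
        rw [hw]
        have h1' : y ≠ g := fun hc => hy (by rw [hc, hidx])
        have h2' : ind (idx u) y = 0 := if_neg hy
        simp [h1', h2']
      · rw [hw, Finset.sum_sub_distrib]
        rw [Finset.sum_eq_single g (fun y _ hy => if_neg hy)
          (fun h => absurd (Finset.mem_univ _) h), if_pos rfl, ← Finset.mul_sum, ← hm,
          inv_mul_cancel₀ hmne, sub_self]
    have hδ : (fun y => if y = g then (1:ℂ) else 0) = fun y => w y + m⁻¹ * ind (idx u) y := by
      funext y; rw [hw]; ring
    rw [hδ]
    have hsplit : t.mulVec (fun y => w y + m⁻¹ * ind (idx u) y) x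
        = t.mulVec w x + m⁻¹ * t.mulVec (ind (idx u)) x := by
      have : (fun y => w y + m⁻¹ * ind (idx u) y) = w + m⁻¹ • ind (idx u) := by
        funext y; simp [Pi.add_apply, Pi.smul_apply, smul_eq_mul]
      rw [this, Matrix.mulVec_add, Matrix.mulVec_smul]
      simp
    rw [hsplit, mulVec_eq_Phi2_smul hc0 hc1 ht u hWw, mulVec_ind_eq ht _ x, h1, h2]
    simp

/-- the basic triple-product elements of the Terwilliger algebra -/
noncomputable def Bmat (i j : F) : Matrix (FrobGrp p r) (FrobGrp p r) ℂ :=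
  dualIdem _ (conjClass (κ i)) * adjMat _ (conjClass (κ j * (κ i)⁻¹)) *
    dualIdem _ (conjClass (κ j))

lemma Bmat_mem (i j : F) : Bmat i j ∈ TerwAlg (FrobGrp p r) := by
  refine mul_mem (mul_mem ?_ ?_) ?_
  · exact Algebra.subset_adjoin (Or.inr ⟨κ i, rfl⟩)
  · exact Algebra.subset_adjoin (Or.inl ⟨κ j * (κ i)⁻¹, rfl⟩)
  · exact Algebra.subset_adjoin (Or.inr ⟨κ j, rfl⟩)

lemma dualIdem_mem (i : F) : dualIdem _ (conjClass (κ i)) ∈ TerwAlg (FrobGrp p r) :=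
  Algebra.subset_adjoin (Or.inr ⟨κ i, rfl⟩)

lemma Phi1_Bmat (i j i' j' : F) :
    Phi1 (Bmat i j) i' j' =
      if i' = i ∧ j' = j then
        ∑ y : FrobGrp p r,
          (if cIdx (y * (κ i)⁻¹) = cIdx (κ j * (κ i)⁻¹) ∧ cIdx y = j then (1:ℂ) else 0)
      else 0 := by
  rw [Phi1_apply]
  unfold Bmat
  rw [← Matrix.mulVec_mulVec, ← Matrix.mulVec_mulVec, dualIdem_mulVec]
  have hout : (κ i' ∈ conjClass (κ (p := p) (r := r) i)) ↔ i' = i := by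
    rw [mem_conjClass_iff, cIdx_κ, cIdx_κ]
  by_cases hii : i' = i
  · rw [if_pos (hout.mpr hii)]
    subst hii
    rw [adjMat_mulVec]
    by_cases hjj : j' = j
    · subst hjj
      rw [if_pos ⟨rfl, rfl⟩]
      refine Finset.sum_congr rfl fun y _ => ?_
      rw [dualIdem_mulVec]
      have h1 : (y * (κ i')⁻¹ ∈ conjClass (κ (p := p) (r := r) j' * (κ i')⁻¹)) ↔
          cIdx (y * (κ i')⁻¹) = cIdx (κ j' * (κ i')⁻¹) := mem_conjClass_iff _ _
      have h2 : (y ∈ conjClass (κ (p := p) (r := r) j')) ↔ cIdx y = j' := by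
        rw [mem_conjClass_iff, cIdx_κ]
      by_cases ha : cIdx (y * (κ (p := p) (r := r) i')⁻¹) = cIdx (κ j' * (κ i')⁻¹) <;>
        by_cases hb : cIdx y = j' <;>
        simp [h1, h2, ha, hb, ind]
    · rw [if_neg (fun hc => hjj hc.2)]
      refine Finset.sum_eq_zero fun y _ => ?_
      rw [dualIdem_mulVec]
      have h2 : (y ∈ conjClass (κ (p := p) (r := r) j)) ↔ cIdx y = j := by
        rw [mem_conjClass_iff, cIdx_κ]
      by_cases hb : cIdx y = j
      · have : ind j' y = 0 := if_neg (fun hc => hjj (hc.symm.trans hb))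
        simp [h2, hb, this]
      · simp [h2, hb]
  · rw [if_neg (fun h => hii (hout.mp h)), if_neg (fun hc => hii hc.1)]

lemma Bmat_sum_ne_zero (i j : F) :
    (∑ y : FrobGrp p r,
      (if cIdx (y * (κ i)⁻¹) = cIdx (κ j * (κ i)⁻¹) ∧ cIdx y = j then (1:ℂ) else 0)) ≠ 0 := by
  rw [Finset.sum_boole, Nat.cast_ne_zero]
  refine Finset.card_ne_zero_of_mem (Finset.mem_filter.mpr ⟨Finset.mem_univ (κ j), rfl, cIdx_κ j⟩)

lemma Phi2_Bmat {c2 : F} (hc0 : c2 ≠ 0) (hc1 : c2 ≠ 1) (i j : F)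
    (u : (GaloisField p r)ˣ) (h : ¬(i = idx u ∧ j = idx u)) :
    Phi2 c2 (Bmat i j) u = 0 := by
  show (Bmat i j).mulVec (wv c2 u) (pt1 u) = 0
  unfold Bmat
  rw [← Matrix.mulVec_mulVec, ← Matrix.mulVec_mulVec, dualIdem_mulVec]
  by_cases hi : i = idx u
  · have hj : j ≠ idx u := fun hc => h ⟨hi, hc⟩
    have hE2 : (dualIdem _ (conjClass (κ (p := p) (r := r) j))).mulVec (wv c2 u) = 0 := by
      funext y
      rw [dualIdem_mulVec]
      by_cases hy : y ∈ conjClass (κ (p := p) (r := r) j)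
      · rw [if_pos hy, Pi.zero_apply]
        have hyj : cIdx y = j := by rw [(mem_conjClass_iff _ _).mp hy, cIdx_κ]
        exact (IsW_wv hc0 hc1 u).1 y (fun hc => hj ((hyj.symm.trans hc)))
      · rw [if_neg hy]; rfl
    rw [hE2, Matrix.mulVec_zero]
    by_cases hp : pt1 u ∈ conjClass (κ (p := p) (r := r) i)
    · rw [if_pos hp]; rfl
    · rw [if_neg hp]
  · have hp : pt1 u ∉ conjClass (κ (p := p) (r := r) i) := by
      rw [mem_conjClass_iff, cIdx_pt1, cIdx_κ]
      exact fun hc => hi hc.symm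
    rw [if_neg hp]

lemma Phi1_dualIdem (i i' j' : F) :
    Phi1 (dualIdem _ (conjClass (κ (p := p) (r := r) i))) i' j' =
      if i' = i ∧ j' = i then 1 else 0 := by
  rw [Phi1_apply, dualIdem_mulVec]
  have hout : (κ i' ∈ conjClass (κ (p := p) (r := r) i)) ↔ i' = i := by
    rw [mem_conjClass_iff, cIdx_κ, cIdx_κ]
  by_cases hii : i' = i
  · rw [if_pos (hout.mpr hii)]
    subst hii
    unfold ind
    rw [cIdx_κ]
    by_cases hjj : i' = j'
    · rw [if_pos hjj, if_pos ⟨rfl, hjj.symm⟩]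
    · rw [if_neg hjj, if_neg (fun hc => hjj hc.2.symm)]
  · rw [if_neg (fun h => hii (hout.mp h)), if_neg (fun hc => hii hc.1)]

lemma Phi2_dualIdem {c2 : F} (hc1 : c2 ≠ 1) (i : F) (u : (GaloisField p r)ˣ) :
    Phi2 c2 (dualIdem _ (conjClass (κ (p := p) (r := r) i))) u =
      if idx u = i then 1 else 0 := by
  show (dualIdem _ (conjClass (κ (p := p) (r := r) i))).mulVec (wv c2 u) (pt1 u) = _
  rw [dualIdem_mulVec]
  have hout : (pt1 u ∈ conjClass (κ (p := p) (r := r) i)) ↔ idx u = i := by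
    rw [mem_conjClass_iff, cIdx_pt1, cIdx_κ]
  by_cases hi : idx u = i
  · rw [if_pos (hout.mpr hi), if_pos hi, wv_pt1 hc1 u]
  · rw [if_neg (fun h => hi (hout.mp h)), if_neg hi]

lemma Phi1_zero : Phi1 (0 : Matrix (FrobGrp p r) (FrobGrp p r) ℂ) = 0 := by
  ext i j
  rw [Phi1_apply, Matrix.zero_mulVec, Matrix.zero_apply]
  rfl

lemma Phi2_zero (c2 : F) : Phi2 c2 (0 : Matrix (FrobGrp p r) (FrobGrp p r) ℂ) = 0 := by
  funext u
  show (0 : Matrix (FrobGrp p r) (FrobGrp p r) ℂ).mulVec _ _ = 0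
  rw [Matrix.zero_mulVec]
  rfl

/-- the scalar attached to `Bmat i j` -/
noncomputable def SB (i j : F) : ℂ :=
  ∑ y : FrobGrp p r,
    (if cIdx (y * (κ i)⁻¹) = cIdx (κ j * (κ i)⁻¹) ∧ cIdx y = j then (1:ℂ) else 0)

lemma SB_ne_zero (i j : F) : SB i j ≠ 0 := Bmat_sum_ne_zero i j

lemma Phi1_Bmat' (i j : F) :
    Phi1 (Bmat i j) = SB i j • Matrix.single i j (1:ℂ) := by
  ext i' j'
  rw [Phi1_Bmat]
  simp only [Matrix.smul_apply, Matrix.single, Matrix.of_apply, smul_eq_mul]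
  by_cases h1 : i' = i <;> by_cases h2 : j' = j
  · rw [if_pos ⟨h1, h2⟩, if_pos ⟨h1.symm, h2.symm⟩, mul_one]; rfl
  · rw [if_neg (fun hc => h2 hc.2), if_neg (fun hc => h2 hc.2.symm), mul_zero]
  · rw [if_neg (fun hc => h1 hc.1), if_neg (fun hc => h1 hc.1.symm), mul_zero]
  · rw [if_neg (fun hc => h1 hc.1), if_neg (fun hc => h1 hc.1.symm), mul_zero]

lemma Phi2_Bmat_zero {c2 : F} (hc0 : c2 ≠ 0) (hc1 : c2 ≠ 1) (i j : F)
    (h : i = 0 ∨ j = 0) : Phi2 c2 (Bmat i j) = 0 := by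
  funext u
  rw [Phi2_Bmat hc0 hc1 i j u]
  · rfl
  · rintro ⟨hi, hj⟩
    rcases h with h | h
    · exact idx_ne_zero u (by rw [← hi, h])
    · exact idx_ne_zero u (by rw [← hj, h])

lemma Phi1_dualIdem' (i : F) :
    Phi1 (dualIdem _ (conjClass (κ (p := p) (r := r) i))) = Matrix.single i i (1:ℂ) := by
  ext i' j'
  rw [Phi1_dualIdem]
  simp only [Matrix.single, Matrix.of_apply]
  by_cases h1 : i' = i <;> by_cases h2 : j' = i
  · rw [if_pos ⟨h1, h2⟩, if_pos ⟨h1.symm, h2.symm⟩]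
  · rw [if_neg (fun hc => h2 hc.2), if_neg (fun hc => h2 hc.2.symm)]
  · rw [if_neg (fun hc => h1 hc.1), if_neg (fun hc => h1 hc.1.symm)]
  · rw [if_neg (fun hc => h1 hc.1), if_neg (fun hc => h1 hc.1.symm)]

lemma Phi2_dualIdem' {c2 : F} (hc1 : c2 ≠ 1) (u : (GaloisField p r)ˣ) :
    Phi2 c2 (dualIdem _ (conjClass (κ (idx u)))) = Pi.single u (1:ℂ) := by
  funext u'
  rw [Phi2_dualIdem hc1 (idx u) u', Pi.single_apply]
  by_cases h : u' = u
  · rw [if_pos (by rw [h]), if_pos h]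
  · rw [if_neg (fun hc => h (idx_injective hc)), if_neg h]

end WithFintype

end Frob

/-- reindexing of function algebras, as an algebra equivalence -/
noncomputable def piCongrAlg {α β : Type*} (e : α ≃ β) : (α → ℂ) ≃ₐ[ℂ] (β → ℂ) :=
  { Equiv.piCongrLeft' (fun _ => ℂ) e with
    map_mul' := fun _ _ => rfl
    map_add' := fun _ _ => rfl
    commutes' := fun _ => rfl }

/-- product of algebra equivalences -/
noncomputable def prodCongrAlg {A B A' B' : Type*} [Semiring A] [Semiring B] [Semiring A']
    [Semiring B'] [Algebra ℂ A] [Algebra ℂ B] [Algebra ℂ A'] [Algebra ℂ B']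
    (e1 : A ≃ₐ[ℂ] A') (e2 : B ≃ₐ[ℂ] B') : (A × B) ≃ₐ[ℂ] (A' × B') :=
  { RingEquiv.prodCongr e1.toRingEquiv e2.toRingEquiv with
    commutes' := fun c => by
      show (e1 (algebraMap ℂ A c), e2 (algebraMap ℂ B c)) = _
      rw [e1.commutes, e2.commutes]
      rfl }

open Frob

theorem stmt17_aux (p r : ℕ) [Fact p.Prime] (hr : 1 ≤ r) (hq : 3 ≤ p ^ r)
    [Fintype (FrobGrp p r)] [DecidableEq (FrobGrp p r)] :
    Nonempty (TerwAlg (FrobGrp p r) ≃ₐ[ℂ]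
      (Matrix (Fin (p ^ r)) (Fin (p ^ r)) ℂ × (Fin (p ^ r - 1) → ℂ))) := by
  classical
  have hr0 : r ≠ 0 := by omega
  have hcardF : Fintype.card (GaloisField p r) = p ^ r := by
    rw [← Nat.card_eq_fintype_card]; exact GaloisField.card p r hr0
  obtain ⟨c2, hc0, hc1⟩ : ∃ c : GaloisField p r, c ≠ 0 ∧ c ≠ 1 := by
    by_contra hcon
    push_neg at hcon
    have hsub : (Finset.univ : Finset (GaloisField p r)) ⊆ {0, 1} := by
      intro c _
      rcases eq_or_ne c 0 with h | h
      · simp [h]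
      · simp [hcon c h]
    have hle := Finset.card_le_card hsub
    rw [Finset.card_univ, hcardF] at hle
    have h2 : ({0, 1} : Finset (GaloisField p r)).card ≤ 2 :=
      (Finset.card_insert_le _ _).trans (by simp)
    omega
  set Tgt := (Matrix (GaloisField p r) (GaloisField p r) ℂ × ((GaloisField p r)ˣ → ℂ))
  let Φ : TerwAlg (FrobGrp p r) →ₐ[ℂ] Tgt :=
  { toFun := fun t => (Phi1 t.1, Phi2 c2 t.1)
    map_one' := congrArg₂ Prod.mk Phi1_one (Phi2_one hc1)
    map_mul' := fun s t => congrArg₂ Prod.mk (Phi1_mul s.2 t.2) (Phi2_mul hc0 hc1 s.2 t.2)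
    map_zero' := congrArg₂ Prod.mk Phi1_zero (Phi2_zero c2)
    map_add' := fun s t => congrArg₂ Prod.mk (Phi1_add _ _) (Phi2_add c2 _ _)
    commutes' := fun c => by
      have hval : ((algebraMap ℂ (TerwAlg (FrobGrp p r)) c) :
          Matrix (FrobGrp p r) (FrobGrp p r) ℂ) = c • 1 := by
        rw [← Algebra.algebraMap_eq_smul_one]; rfl
      refine Prod.ext ?_ ?_
      · show Phi1 _ = _
        rw [hval, Phi1_smul, Phi1_one, Algebra.algebraMap_eq_smul_one]
        rfl
      · show Phi2 c2 _ = _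
        rw [hval, Phi2_smul, Phi2_one hc1, Algebra.algebraMap_eq_smul_one]
        rfl }
  have hΦapp : ∀ (t : Matrix (FrobGrp p r) (FrobGrp p r) ℂ)
      (htm : t ∈ TerwAlg (FrobGrp p r)), Φ ⟨t, htm⟩ = (Phi1 t, Phi2 c2 t) := fun _ _ => rfl
  have hinj : Function.Injective Φ := by
    rw [injective_iff_map_eq_zero]
    intro t htz
    have h1 : Phi1 t.1 = 0 := congrArg Prod.fst htz
    have h2 : Phi2 c2 t.1 = 0 := congrArg Prod.snd htz
    exact Subtype.ext (eq_zero_of_Phi_eq_zero hc0 hc1 t.2 h1 h2)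
  have hsurj : Function.Surjective Φ := by
    have hBij : ∀ i j : GaloisField p r,
        ((Matrix.single i j (1:ℂ), (0 : (GaloisField p r)ˣ → ℂ)) : Tgt) ∈ Φ.range := by
      intro i j
      have e1 : Φ ⟨Bmat i 0, Bmat_mem i 0⟩
          = (SB i 0 • Matrix.single i 0 (1:ℂ), (0 : (GaloisField p r)ˣ → ℂ)) := by
        rw [hΦapp]
        exact Prod.ext (Phi1_Bmat' i 0) (Phi2_Bmat_zero hc0 hc1 i 0 (Or.inr rfl))
      have e2 : Φ ⟨Bmat 0 j, Bmat_mem 0 j⟩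
          = (SB 0 j • Matrix.single 0 j (1:ℂ), (0 : (GaloisField p r)ˣ → ℂ)) := by
        rw [hΦapp]
        exact Prod.ext (Phi1_Bmat' 0 j) (Phi2_Bmat_zero hc0 hc1 0 j (Or.inl rfl))
      have key : Φ (⟨Bmat i 0, Bmat_mem i 0⟩ * ⟨Bmat 0 j, Bmat_mem 0 j⟩)
          = (((SB i 0 * SB 0 j) • Matrix.single i j (1:ℂ),
              (0 : (GaloisField p r)ˣ → ℂ)) : Tgt) := by
        rw [map_mul, e1, e2]
        refine Prod.ext ?_ ?_
        · show (SB i 0 • Matrix.single i 0 (1:ℂ)) *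
            (SB 0 j • Matrix.single 0 j (1:ℂ)) = _
          rw [smul_mul_assoc, mul_smul_comm, smul_smul, Matrix.single_mul_single_same,
            one_mul]
        · show (0 : (GaloisField p r)ˣ → ℂ) * 0 = 0
          rw [mul_zero]
      have hmemP : (((SB i 0 * SB 0 j) • Matrix.single i j (1:ℂ),
          (0 : (GaloisField p r)ˣ → ℂ)) : Tgt) ∈ Φ.range := key ▸ Φ.mem_range_self _
      have hs := Φ.range.smul_mem hmemP (SB i 0 * SB 0 j)⁻¹
      have hSne : SB i 0 * SB 0 j ≠ 0 := mul_ne_zero (SB_ne_zero i 0) (SB_ne_zero 0 j)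
      have heq : (SB i 0 * SB 0 j)⁻¹ • (((SB i 0 * SB 0 j) • Matrix.single i j (1:ℂ),
          (0 : (GaloisField p r)ˣ → ℂ)) : Tgt)
          = ((Matrix.single i j (1:ℂ), (0 : (GaloisField p r)ˣ → ℂ)) : Tgt) := by
        rw [Prod.smul_mk, smul_smul, inv_mul_cancel₀ hSne, one_smul, smul_zero]
      rwa [heq] at hs
    have hSing : ∀ u : (GaloisField p r)ˣ,
        (((0 : Matrix (GaloisField p r) (GaloisField p r) ℂ), Pi.single u (1:ℂ)) : Tgt)
          ∈ Φ.range := by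
      intro u
      have e3 : Φ ⟨dualIdem _ (conjClass (κ (idx u))), dualIdem_mem (idx u)⟩
          = ((Matrix.single (idx u) (idx u) (1:ℂ), Pi.single u (1:ℂ)) : Tgt) := by
        rw [hΦapp]
        exact Prod.ext (Phi1_dualIdem' (idx u)) (Phi2_dualIdem' hc1 u)
      have h4 : ((Matrix.single (idx u) (idx u) (1:ℂ), Pi.single u (1:ℂ)) : Tgt)
          ∈ Φ.range := e3 ▸ Φ.mem_range_self _
      have h5 := hBij (idx u) (idx u)
      have h6 := Φ.range.sub_mem h4 h5
      have heq : ((Matrix.single (idx u) (idx u) (1:ℂ), Pi.single u (1:ℂ)) : Tgt)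
          - ((Matrix.single (idx u) (idx u) (1:ℂ), (0 : (GaloisField p r)ˣ → ℂ)) : Tgt)
          = (((0 : Matrix (GaloisField p r) (GaloisField p r) ℂ), Pi.single u (1:ℂ)) : Tgt) := by
        rw [Prod.mk_sub_mk, sub_self, sub_zero]
      rwa [heq] at h6
    intro z
    obtain ⟨M, f⟩ := z
    have hM : ((M, (0 : (GaloisField p r)ˣ → ℂ)) : Tgt) ∈ Φ.range := by
      have hrep : ((M, (0 : (GaloisField p r)ˣ → ℂ)) : Tgt)
          = ∑ i : GaloisField p r, ∑ j : GaloisField p r,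
              M i j • ((Matrix.single i j (1:ℂ), (0 : (GaloisField p r)ˣ → ℂ)) : Tgt) := by
        refine Prod.ext ?_ ?_
        · show M = _
          rw [Prod.fst_sum]
          conv_lhs => rw [Matrix.matrix_eq_sum_single M]
          refine Finset.sum_congr rfl fun i _ => ?_
          rw [Prod.fst_sum]
          refine Finset.sum_congr rfl fun j _ => ?_
          show _ = (M i j • (Matrix.single i j (1:ℂ),
            (0 : (GaloisField p r)ˣ → ℂ))).1
          rw [Prod.smul_mk, Matrix.smul_single, smul_eq_mul, mul_one]
        · show (0 : (GaloisField p r)ˣ → ℂ) = _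
          rw [Prod.snd_sum]
          refine (Finset.sum_eq_zero fun i _ => ?_).symm
          rw [Prod.snd_sum]
          refine Finset.sum_eq_zero fun j _ => ?_
          rw [Prod.smul_mk, smul_zero]
      rw [hrep]
      exact sum_mem fun i _ => sum_mem fun j _ =>
        Φ.range.smul_mem (hBij i j) _
    have hf : (((0 : Matrix (GaloisField p r) (GaloisField p r) ℂ), f) : Tgt) ∈ Φ.range := by
      have hrep : (((0 : Matrix (GaloisField p r) (GaloisField p r) ℂ), f) : Tgt)
          = ∑ u : (GaloisField p r)ˣ,
              f u • (((0 : Matrix (GaloisField p r) (GaloisField p r) ℂ),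
                Pi.single u (1:ℂ)) : Tgt) := by
        refine Prod.ext ?_ ?_
        · rw [Prod.fst_sum]
          simp [Prod.smul_mk]
        · rw [Prod.snd_sum]
          simp only [Prod.smul_mk, Prod.snd]
          rw [← Finset.univ_sum_single f]
          refine Finset.sum_congr rfl fun u _ => ?_
          funext u'
          rw [Pi.smul_apply, Pi.single_apply, Pi.single_apply]
          by_cases h : u' = u <;> simp [h]
      rw [hrep]
      exact sum_mem fun u _ => Φ.range.smul_mem (hSing u) _
    have hsum := Φ.range.add_mem hM hf
    have heq : ((M, (0 : (GaloisField p r)ˣ → ℂ)) : Tgt)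
        + (((0 : Matrix (GaloisField p r) (GaloisField p r) ℂ), f) : Tgt) = (M, f) := by
      rw [Prod.mk_add_mk, add_zero, zero_add]
    rw [heq] at hsum
    exact hsum
  let e0 := AlgEquiv.ofBijective Φ ⟨hinj, hsurj⟩
  let eF : GaloisField p r ≃ Fin (p ^ r) := Fintype.equivFinOfCardEq hcardF
  have hcardU : Fintype.card (GaloisField p r)ˣ = p ^ r - 1 := by
    rw [← Nat.card_eq_fintype_card, Nat.card_units, Nat.card_eq_fintype_card, hcardF]
  let eU : (GaloisField p r)ˣ ≃ Fin (p ^ r - 1) := Fintype.equivFinOfCardEq hcardU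
  exact ⟨e0.trans (prodCongrAlg (Matrix.reindexAlgEquiv ℂ ℂ eF) (piCongrAlg eU))⟩


/-- Theorem 5.9: Wedderburn decomposition of the Terwilliger algebra of the Frobenius
group `ℤ_p^r ⋊ ℤ_{p^r-1}`: one primary component of dimension `(p^r)²` and `p^r - 1`
one-dimensional components. -/
theorem stmt17 (p r : ℕ) [Fact p.Prime] (hr : 1 ≤ r) (hq : 3 ≤ p ^ r)
    [Fintype (FrobGrp p r)] [DecidableEq (FrobGrp p r)] :
    Nonempty (TerwAlg (FrobGrp p r) ≃ₐ[ℂ]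
      (Matrix (Fin (p ^ r)) (Fin (p ^ r)) ℂ × (Fin (p ^ r - 1) → ℂ))) := by
  exact stmt17_aux p r hr hq
end
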